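/- Fix L : ℕ, finite types C, C̃, C' and finite dimension types d, d'. Let Ω ⊆ C, ε ≥ 0, let ρ : K × K × C → Matrix d d ℂ have all entries positive semidefinite, and let N be a linear map as in the state-level Corollary: positive, total-trace-preserving, commuting with the ideal map R, transcript-local over C, and abort-forcing off Ω (i.e., for every positive-semidefinite-valued input, every c ∉ Ω and (k'_A, k'_B) ≠ (⊥, ⊥), the corresponding output entry is 0). Suppose further there exists a family η : K × K × C × C̃ → Matrix d d ℂ with all entries positive semidefinite such that (i) ∑ c̃ : C̃, η(k_A, k_B, c, c̃) = ρ(k_A, k_B, c) for every (k_A, k_B) and every c ∈ Ω, and (ii) ∑ over (k_A, k_B, c, c̃) of ‖η(k_A, k_B, c, c̃) − (R η)(k_A, k_B, c, c̃)‖₁ ≤ ε. Then ∑ over (k'_A, k'_B, c, c') of ‖(N ρ)(k'_A, k'_B, (c, c')) − (R (N ρ))(k'_A, k'_B, (c, c'))‖₁ ≤ ε. -/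

import Mathlib

open scoped ComplexOrder

/-- The key alphabet: keys of length `l ≤ L`, i.e. pairs of a length `l : Fin (L+1)`
and a bitstring of that length. -/
abbrev Key (L : ℕ) := Σ l : Fin (L+1), (Fin (l : ℕ) → Bool)

/-- The length of a key. -/
def lenKey {L : ℕ} (k : Key L) : Fin (L+1) := k.1

/-- The unique key of length `0` (the abort symbol `⊥`). -/
def botKey (L : ℕ) : Key L := ⟨0, fun _ => false⟩

/-- The ideal-key weight `w(k_A, k_B)`: `2^(-len k_A)` if the lengths agree and
`k_A = k_B`, `0` if the lengths agree but `k_A ≠ k_B`, and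
`2^(-(len k_A + len k_B))` if the lengths differ. -/
noncomputable def idealWt {L : ℕ} (kA kB : Key L) : ℝ :=
  if lenKey kA = lenKey kB then
    (if kA = kB then (2:ℝ) ^ (-((lenKey kA : ℕ) : ℤ)) else 0)
  else (2:ℝ) ^ (-(((lenKey kA : ℕ) : ℤ) + ((lenKey kB : ℕ) : ℤ)))

/-- The ideal map `R`, acting per value of the additional classical index `c`:
it replaces the key registers by ideal keys, weighting by `idealWt` and summing the
input state over all key pairs with the same pair of lengths. -/
noncomputable def idealMap {L : ℕ} {C d : Type*}
    (ρ : Key L × Key L × C → Matrix d d ℂ) : Key L × Key L × C → Matrix d d ℂ :=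
  fun p => idealWt p.1 p.2.1 •
    ∑ q : Key L × Key L,
      if lenKey q.1 = lenKey p.1 ∧ lenKey q.2 = lenKey p.2.1
        then ρ (q.1, q.2, p.2.2) else 0

/-- The trace norm `‖A‖₁` of a complex matrix `A`: the trace of the positive
semidefinite square root of `Aᴴ * A`. -/
noncomputable def traceNorm {n : Type*} [Fintype n] [DecidableEq n] (A : Matrix n n ℂ) : ℝ :=
  ((Matrix.posSemidef_conjTranspose_mul_self A).1.eigenvectorUnitary *
    Matrix.diagonal (fun i => ((Real.sqrt
      ((Matrix.posSemidef_conjTranspose_mul_self A).1.eigenvalues i) : ℝ) : ℂ)) *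
    (star (Matrix.posSemidef_conjTranspose_mul_self A).1.eigenvectorUnitary :
      Matrix n n ℂ)).trace.re


section QKDAux
set_option linter.unusedSectionVars false

namespace QKDAux
open Matrix

variable {n : Type*} [Fintype n] [DecidableEq n] {A : Matrix n n ℂ}

lemma psd_add {A B : Matrix n n ℂ} (hA : A.PosSemidef) (hB : B.PosSemidef) :
    (A + B).PosSemidef :=
  hA.add hB

lemma psd_sum {ι : Type*} (s : Finset ι) (f : ι → Matrix n n ℂ)
    (h : ∀ i ∈ s, (f i).PosSemidef) : (∑ i ∈ s, f i).PosSemidef :=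
  Finset.sum_induction f _ (fun _ _ ha hb => psd_add ha hb) Matrix.PosSemidef.zero h

lemma psd_diag_nonneg {A : Matrix n n ℂ} (hA : A.PosSemidef) (i : n) : 0 ≤ A i i := by
  exact hA.diag_nonneg

lemma psd_trace_re_nonneg {A : Matrix n n ℂ} (hA : A.PosSemidef) : 0 ≤ A.trace.re := by
  rw [Matrix.trace, Complex.re_sum]
  exact Finset.sum_nonneg fun i _ => (Complex.nonneg_iff.mp (psd_diag_nonneg hA i)).1

lemma psd_smul_real {A : Matrix n n ℂ} (hA : A.PosSemidef) {r : ℝ} (hr : 0 ≤ r) :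
    (r • A).PosSemidef :=
  hA.smul hr

lemma traceNorm_nonneg (A : Matrix n n ℂ) : 0 ≤ traceNorm A := by
  unfold traceNorm
  apply psd_trace_re_nonneg
  rw [Matrix.star_eq_conjTranspose]
  exact (Matrix.PosSemidef.diagonal (fun i =>
    Complex.zero_le_real.mpr (Real.sqrt_nonneg _))).mul_mul_conjTranspose_same _

lemma traceNorm_zero : traceNorm (0 : Matrix n n ℂ) = 0 := by
  unfold traceNorm
  simp [Matrix.IsHermitian.eigenvalues_eq]

lemma conj_diag_mul (hA : A.IsHermitian) (f g : n → ℝ) :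
    ((hA.eigenvectorUnitary : Matrix n n ℂ) * diagonal (Complex.ofReal ∘ f) *
        star (hA.eigenvectorUnitary : Matrix n n ℂ)) *
      ((hA.eigenvectorUnitary : Matrix n n ℂ) * diagonal (Complex.ofReal ∘ g) *
        star (hA.eigenvectorUnitary : Matrix n n ℂ))
    = (hA.eigenvectorUnitary : Matrix n n ℂ) * diagonal (Complex.ofReal ∘ fun i => f i * g i) *
        star (hA.eigenvectorUnitary : Matrix n n ℂ) := by
  set S := (hA.eigenvectorUnitary : Matrix n n ℂ) with hS
  have hUs : star S * S = 1 := Matrix.mem_unitaryGroup_iff'.mp hA.eigenvectorUnitary.2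
  calc (S * diagonal (Complex.ofReal ∘ f) * star S) * (S * diagonal (Complex.ofReal ∘ g) * star S)
      = S * (diagonal (Complex.ofReal ∘ f) * ((star S * S) * diagonal (Complex.ofReal ∘ g))) * star S := by
        simp only [Matrix.mul_assoc]
    _ = S * diagonal (Complex.ofReal ∘ fun i => f i * g i) * star S := by
        rw [hUs, Matrix.one_mul, diagonal_mul_diagonal]
        have hfg : (fun i => (Complex.ofReal ∘ f) i * (Complex.ofReal ∘ g) i)
            = (Complex.ofReal ∘ fun i => f i * g i) := by funext i; simp
        rw [hfg]

lemma psd_conj_diag (hA : A.IsHermitian) {f : n → ℝ} (hf : ∀ i, 0 ≤ f i) :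
    ((hA.eigenvectorUnitary : Matrix n n ℂ) * diagonal (Complex.ofReal ∘ f) *
        star (hA.eigenvectorUnitary : Matrix n n ℂ)).PosSemidef := by
  rw [Matrix.star_eq_conjTranspose]
  exact (Matrix.PosSemidef.diagonal (fun i => by
    simpa using Complex.zero_le_real.mpr (hf i))).mul_mul_conjTranspose_same _

lemma trace_conj_diag (hA : A.IsHermitian) (f : n → ℝ) :
    ((hA.eigenvectorUnitary : Matrix n n ℂ) * diagonal (Complex.ofReal ∘ f) *
        star (hA.eigenvectorUnitary : Matrix n n ℂ)).trace.re = ∑ i, f i := by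
  set S := (hA.eigenvectorUnitary : Matrix n n ℂ) with hS
  have hUs : star S * S = 1 := Matrix.mem_unitaryGroup_iff'.mp hA.eigenvectorUnitary.2
  rw [Matrix.trace_mul_cycle, hUs, Matrix.one_mul, Matrix.trace_diagonal]
  simp [Complex.re_sum]

section
open scoped MatrixOrder

lemma psd_sq_unique {P Q : Matrix n n ℂ} (hP : P.PosSemidef) (hQ : Q.PosSemidef)
    (h : P * P = Q * Q) : P = Q := by
  rw [← CFC.sqrt_mul_self P hP.nonneg, ← CFC.sqrt_mul_self Q hQ.nonneg, h]

end

lemma spec (hA : A.IsHermitian) :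
    A = (hA.eigenvectorUnitary : Matrix n n ℂ) * diagonal (Complex.ofReal ∘ hA.eigenvalues) *
      star (hA.eigenvectorUnitary : Matrix n n ℂ) := by
  conv_lhs => rw [hA.spectral_theorem, Unitary.conjStarAlgAut_apply]
  rfl

lemma sqrt_eq_abs_eigen (hA : A.IsHermitian) :
    ((Matrix.posSemidef_conjTranspose_mul_self A).1.eigenvectorUnitary *
    Matrix.diagonal (fun i => ((Real.sqrt
      ((Matrix.posSemidef_conjTranspose_mul_self A).1.eigenvalues i) : ℝ) : ℂ)) *
    (star (Matrix.posSemidef_conjTranspose_mul_self A).1.eigenvectorUnitary :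
      Matrix n n ℂ))
      = (hA.eigenvectorUnitary : Matrix n n ℂ) * diagonal (Complex.ofReal ∘ fun i => |hA.eigenvalues i|) *
        star (hA.eigenvectorUnitary : Matrix n n ℂ) := by
  symm
  have hB : (Aᴴ * A).IsHermitian := (Matrix.posSemidef_conjTranspose_mul_self A).1
  have e1 := conj_diag_mul hA (fun i => |hA.eigenvalues i|) (fun i => |hA.eigenvalues i|)
  have e2 := conj_diag_mul hB (fun i => Real.sqrt (hB.eigenvalues i))
    (fun i => Real.sqrt (hB.eigenvalues i))
  have habs : (fun i => |hA.eigenvalues i| * |hA.eigenvalues i|)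
      = fun i => hA.eigenvalues i * hA.eigenvalues i := funext fun i => abs_mul_abs_self _
  have hsq : (fun i => Real.sqrt (hB.eigenvalues i) * Real.sqrt (hB.eigenvalues i))
      = hB.eigenvalues := funext fun i =>
        Real.mul_self_sqrt ((Matrix.posSemidef_conjTranspose_mul_self A).eigenvalues_nonneg i)
  rw [habs, ← conj_diag_mul hA hA.eigenvalues hA.eigenvalues, ← spec hA] at e1
  rw [hsq, ← spec hB] at e2
  apply psd_sq_unique (psd_conj_diag hA fun i => abs_nonneg _)
    (psd_conj_diag hB fun i => Real.sqrt_nonneg _)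
  rw [e1, e2, hA.eq]

lemma traceNorm_herm (hA : A.IsHermitian) :
    traceNorm A = ∑ i, |hA.eigenvalues i| := by
  rw [traceNorm, sqrt_eq_abs_eigen hA, trace_conj_diag hA]

/-- Jordan decomposition of a Hermitian matrix. -/
lemma jordan (hA : A.IsHermitian) :
    ∃ P Q : Matrix n n ℂ, P.PosSemidef ∧ Q.PosSemidef ∧ A = P - Q ∧
      P.trace.re + Q.trace.re = traceNorm A := by
  refine ⟨(hA.eigenvectorUnitary : Matrix n n ℂ) *
      diagonal (Complex.ofReal ∘ fun i => max (hA.eigenvalues i) 0) *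
      star (hA.eigenvectorUnitary : Matrix n n ℂ),
    (hA.eigenvectorUnitary : Matrix n n ℂ) *
      diagonal (Complex.ofReal ∘ fun i => max (-hA.eigenvalues i) 0) *
      star (hA.eigenvectorUnitary : Matrix n n ℂ),
    psd_conj_diag hA fun i => le_max_right _ _,
    psd_conj_diag hA fun i => le_max_right _ _, ?_, ?_⟩
  · have hd : (diagonal (Complex.ofReal ∘ fun i => max (hA.eigenvalues i) 0)
        - diagonal (Complex.ofReal ∘ fun i => max (-hA.eigenvalues i) 0) : Matrix n n ℂ)
        = diagonal (RCLike.ofReal ∘ hA.eigenvalues) := by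
      rw [diagonal_sub]
      congr 1
      funext i
      simp only [Function.comp_apply, Pi.sub_apply, ← Complex.ofReal_sub,
        max_zero_sub_max_neg_zero_eq_self]
      rfl
    rw [← Matrix.sub_mul, ← Matrix.mul_sub, hd]
    exact spec hA
  · rw [trace_conj_diag hA, trace_conj_diag hA, traceNorm_herm hA, ← Finset.sum_add_distrib]
    congr 1; funext i
    rw [max_zero_add_max_neg_zero_eq_abs_self]

lemma traceNorm_sub_le {P Q : Matrix n n ℂ} (hP : P.PosSemidef) (hQ : Q.PosSemidef) :
    traceNorm (P - Q) ≤ P.trace.re + Q.trace.re := by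
  have hH : (P - Q).IsHermitian := hP.1.sub hQ.1
  set S := (hH.eigenvectorUnitary : Matrix n n ℂ) with hS
  have hsU : S * star S = 1 := Matrix.mem_unitaryGroup_iff.mp hH.eigenvectorUnitary.2
  have hdiag : star S * (P - Q) * S = diagonal (RCLike.ofReal ∘ hH.eigenvalues) :=
    by
      have h := hH.conjStarAlgAut_star_eigenvectorUnitary
      rw [Unitary.conjStarAlgAut_star_apply] at h
      exact h
  have hPc : (star S * P * S).PosSemidef := by
    rw [Matrix.star_eq_conjTranspose]
    exact hP.conjTranspose_mul_mul_same _
  have hQc : (star S * Q * S).PosSemidef := by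
    rw [Matrix.star_eq_conjTranspose]
    exact hQ.conjTranspose_mul_mul_same _
  have heig : ∀ i, hH.eigenvalues i
      = ((star S * P * S) i i).re - ((star S * Q * S) i i).re := by
    intro i
    have h1 : (star S * (P - Q) * S) i i = ((RCLike.ofReal ∘ hH.eigenvalues : n → ℂ)) i := by
      rw [hdiag]; simp
    have h2 : star S * (P - Q) * S = star S * P * S - star S * Q * S := by
      rw [Matrix.mul_sub, Matrix.sub_mul]
    rw [h2] at h1
    have := congrArg Complex.re h1
    simpa using this.symm
  have htr : ∀ {M : Matrix n n ℂ}, (star S * M * S).trace = M.trace := by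
    intro M
    rw [Matrix.trace_mul_cycle, hsU, Matrix.one_mul]
  rw [traceNorm_herm hH]
  calc ∑ i, |hH.eigenvalues i|
      ≤ ∑ i, (((star S * P * S) i i).re + ((star S * Q * S) i i).re) := by
        refine Finset.sum_le_sum fun i _ => ?_
        rw [heig i]
        have hp := (Complex.nonneg_iff.mp (psd_diag_nonneg hPc i)).1
        have hq := (Complex.nonneg_iff.mp (psd_diag_nonneg hQc i)).1
        rw [abs_le]; constructor <;> [linarith; linarith]
    _ = (star S * P * S).trace.re + (star S * Q * S).trace.re := by
        rw [Finset.sum_add_distrib, Matrix.trace, Matrix.trace, Complex.re_sum, Complex.re_sum]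
        rfl
    _ = P.trace.re + Q.trace.re := by rw [htr, htr]

lemma key_len_zero_eq_bot {L : ℕ} {k : Key L} (h : lenKey k = 0) : k = botKey L := by
  obtain ⟨l, s⟩ := k
  have hl : l = 0 := h
  subst hl
  unfold botKey
  congr 1
  funext x
  exact absurd x.isLt (by simp)

lemma idealWt_nonneg {L : ℕ} (kA kB : Key L) : 0 ≤ idealWt kA kB := by
  unfold idealWt
  split_ifs <;> positivity

lemma idealWt_bot (L : ℕ) : idealWt (botKey L) (botKey L) = 1 := by
  unfold idealWt
  simp [lenKey, botKey]

lemma idealMap_psd {L : ℕ} {C d : Type*} [Fintype d] [DecidableEq d]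
    (σ : Key L × Key L × C → Matrix d d ℂ) (hσ : ∀ p, (σ p).PosSemidef) (p) :
    (idealMap σ p).PosSemidef := by
  unfold idealMap
  exact psd_smul_real (psd_sum _ _ fun q _ => by
    split_ifs
    · exact hσ _
    · exact Matrix.PosSemidef.zero) (idealWt_nonneg _ _)

lemma idealMap_marg {L : ℕ} {C Ct d : Type*} [Fintype Ct] [Fintype d] [DecidableEq d]
    (η : Key L × Key L × (C × Ct) → Matrix d d ℂ)
    (ρ : Key L × Key L × C → Matrix d d ℂ) (c : C)
    (hm : ∀ kA kB : Key L, ρ (kA, kB, c) = ∑ ct : Ct, η (kA, kB, (c, ct)))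
    (kA kB : Key L) :
    idealMap ρ (kA, kB, c) = ∑ ct : Ct, idealMap η (kA, kB, (c, ct)) := by
  unfold idealMap
  dsimp only
  rw [← Finset.smul_sum]
  congr 1
  rw [Finset.sum_comm]
  refine Finset.sum_congr rfl fun q _ => ?_
  split_ifs with h
  · exact hm q.1 q.2
  · simp

lemma sum_fiber {α β γ δ M : Type*} [Fintype α] [Fintype β] [Fintype γ] [Fintype δ]
    [AddCommMonoid M] (f : α × β × (γ × δ) → M) :
    ∑ p, f p = ∑ c : γ, ∑ x : α × β × δ, f (x.1, x.2.1, (c, x.2.2)) := by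
  have he := Fintype.sum_equiv
    (⟨fun y => (y.2.1, y.2.2.1, (y.1, y.2.2.2)), fun p => (p.2.2.1, (p.1, p.2.1, p.2.2.2)),
      fun y => rfl, fun p => rfl⟩ : (γ × (α × β × δ)) ≃ (α × β × (γ × δ)))
    (fun y => f (y.2.1, y.2.2.1, (y.1, y.2.2.2))) f (fun y => rfl)
  rw [← he, Fintype.sum_prod_type]

lemma sum_swap3 {α β δ M : Type*} [Fintype α] [Fintype β] [Fintype δ]
    [AddCommMonoid M] (h : α × β × δ → M) :
    ∑ y, h y = ∑ e : δ, ∑ q : α × β, h (q.1, q.2, e) := by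
  have he := Fintype.sum_equiv
    (⟨fun y => (y.2.1, y.2.2, y.1), fun p => (p.2.2, (p.1, p.2.1)),
      fun y => rfl, fun p => rfl⟩ : (δ × (α × β)) ≃ (α × β × δ))
    (fun y => h (y.2.1, y.2.2, y.1)) h (fun y => rfl)
  rw [← he, Fintype.sum_prod_type]

end QKDAux
end QKDAux

set_option maxHeartbeats 1600000 in
/-- State-level form of the main reduction theorem: if the practical-setting output
state `ρ`, restricted to the honest-authentication event `Ω`, is the marginal of a
virtual/honest-setting state `η` whose real–ideal trace distance is at most `ε`, then
after the authentication post-processing channel `N` (positive, total-trace-preserving,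
commuting with the ideal map, transcript-local, and abort-forcing off `Ω`) the
real–ideal trace distance of the full protocol output is at most `ε`. -/


theorem qkd_security_reduction (L : ℕ) (C Ct C' d d' : Type*)
    [Fintype C] [Fintype Ct] [Fintype C']
    [Fintype d] [DecidableEq d] [Fintype d'] [DecidableEq d']
    (Ω : Set C) [DecidablePred (· ∈ Ω)] (ε : ℝ) (hε : 0 ≤ ε)
    (ρ : Key L × Key L × C → Matrix d d ℂ)
    (hρ : ∀ p, (ρ p).PosSemidef)
    (N : (Key L × Key L × C → Matrix d d ℂ) →ₗ[ℂ]
          (Key L × Key L × (C × C') → Matrix d' d' ℂ))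
    (hpos : ∀ σ : Key L × Key L × C → Matrix d d ℂ,
        (∀ p, (σ p).PosSemidef) → ∀ p, ((N σ) p).PosSemidef)
    (htr : ∀ σ : Key L × Key L × C → Matrix d d ℂ,
        ∑ p : Key L × Key L × (C × C'), ((N σ) p).trace =
          ∑ p : Key L × Key L × C, (σ p).trace)
    (hcomm : ∀ σ : Key L × Key L × C → Matrix d d ℂ,
        N (idealMap σ) = idealMap (N σ))
    (hlocal : ∀ c : C, ∃ Nc : (Key L × Key L → Matrix d d ℂ) →ₗ[ℂ]
          (Key L × Key L × C' → Matrix d' d' ℂ),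
        ∀ (σ : Key L × Key L × C → Matrix d d ℂ) (kA' kB' : Key L) (c' : C'),
          (N σ) (kA', kB', (c, c')) = Nc (fun q => σ (q.1, q.2, c)) (kA', kB', c'))
    (habort : ∀ σ : Key L × Key L × C → Matrix d d ℂ,
        (∀ p, (σ p).PosSemidef) → ∀ c : C, c ∉ Ω → ∀ (c' : C') (kA' kB' : Key L),
          (kA', kB') ≠ (botKey L, botKey L) → (N σ) (kA', kB', (c, c')) = 0)
    (η : Key L × Key L × (C × Ct) → Matrix d d ℂ)
    (hη : ∀ p, (η p).PosSemidef)
    (hmarg : ∀ (kA kB : Key L) (c : C), c ∈ Ω →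
        ∑ ct : Ct, η (kA, kB, (c, ct)) = ρ (kA, kB, c))
    (hdist : ∑ p : Key L × Key L × (C × Ct),
        traceNorm (η p - idealMap η p) ≤ ε) :
    ∑ p : Key L × Key L × (C × C'),
        traceNorm ((N ρ) p - idealMap (N ρ) p) ≤ ε := by
  classical
  -- reorganize the target sum over the transcript c
  rw [QKDAux.sum_fiber (fun p : Key L × Key L × (C × C') =>
    traceNorm ((N ρ) p - idealMap (N ρ) p))]
  -- reorganize the hypothesis sum likewise
  rw [QKDAux.sum_fiber (fun p : Key L × Key L × (C × Ct) =>
    traceNorm (η p - idealMap η p))] at hdist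
  -- per-transcript bound
  have key : ∀ c : C,
      (∑ x : Key L × Key L × C',
        traceNorm (N ρ (x.1, x.2.1, (c, x.2.2)) - idealMap (N ρ) (x.1, x.2.1, (c, x.2.2))))
      ≤ ∑ y : Key L × Key L × Ct,
        traceNorm (η (y.1, y.2.1, (c, y.2.2)) - idealMap η (y.1, y.2.1, (c, y.2.2))) := by
    intro c
    by_cases hc : c ∈ Ω
    · -- honest-authentication branch
      obtain ⟨Nc, hNc⟩ := hlocal c
      -- the per-(ct) real-ideal differences are Hermitian
      have hherm : ∀ (ct : Ct) (q : Key L × Key L),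
          (η (q.1, q.2, (c, ct)) - idealMap η (q.1, q.2, (c, ct))).IsHermitian :=
        fun ct q => ((hη _).1).sub (QKDAux.idealMap_psd η hη _).1
      choose Pf Qf hPf hQf hPQ htrPQ using fun (ct : Ct) (q : Key L × Key L) =>
        QKDAux.jordan (hherm ct q)
      -- positivity and trace bound for the local channel Nc
      have hext : ∀ τ : Key L × Key L → Matrix d d ℂ, (∀ q, (τ q).PosSemidef) →
          (∀ x : Key L × Key L × C', (Nc τ x).PosSemidef) ∧
          (∑ x : Key L × Key L × C', (Nc τ x).trace.re
            ≤ ∑ q : Key L × Key L, (τ q).trace.re) := by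
        intro τ hτ
        set στ : Key L × Key L × C → Matrix d d ℂ :=
          fun q => if q.2.2 = c then τ (q.1, q.2.1) else 0 with hστ
        have hσpsd : ∀ p, (στ p).PosSemidef := by
          intro p
          dsimp [στ]
          split_ifs
          · exact hτ _
          · exact Matrix.PosSemidef.zero
        have h2 : (fun q : Key L × Key L => στ (q.1, q.2, c)) = τ :=
          funext fun q => by simp [στ]
        have hval : ∀ x : Key L × Key L × C',
            Nc τ x = N στ (x.1, x.2.1, (c, x.2.2)) := by
          intro x
          rw [hNc στ x.1 x.2.1 x.2.2, h2]
        constructor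
        · intro x
          rw [hval x]
          exact hpos στ hσpsd _
        · have hnn : ∀ p, 0 ≤ ((N στ) p).trace.re :=
            fun p => QKDAux.psd_trace_re_nonneg (hpos στ hσpsd p)
          have hinj : Function.Injective
              (fun x : Key L × Key L × C' => (x.1, x.2.1, (c, x.2.2)) :
                Key L × Key L × C' → Key L × Key L × (C × C')) := by
            intro a b hab
            simp only [Prod.mk.injEq] at hab
            obtain ⟨h1, h2', _, h4⟩ := hab
            exact Prod.ext h1 (Prod.ext h2' h4)
          calc ∑ x : Key L × Key L × C', (Nc τ x).trace.re
              = ∑ x : Key L × Key L × C',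
                  ((N στ) (x.1, x.2.1, (c, x.2.2))).trace.re := by
                refine Finset.sum_congr rfl fun x _ => ?_
                rw [hval x]
            _ = ∑ p ∈ Finset.univ.image
                  (fun x : Key L × Key L × C' => (x.1, x.2.1, (c, x.2.2))),
                  ((N στ) p).trace.re := by
                rw [Finset.sum_image (fun a _ b _ h => hinj h)]
            _ ≤ ∑ p : Key L × Key L × (C × C'), ((N στ) p).trace.re :=
                Finset.sum_le_sum_of_subset_of_nonneg (Finset.subset_univ _)
                  (fun p _ _ => hnn p)
            _ = (∑ p : Key L × Key L × (C × C'), ((N στ) p).trace).re := by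
                rw [Complex.re_sum]
            _ = (∑ q : Key L × Key L × C, (στ q).trace).re := by rw [htr στ]
            _ = ∑ q : Key L × Key L × C, (στ q).trace.re := by rw [Complex.re_sum]
            _ = ∑ q : Key L × Key L, (τ q).trace.re := by
                rw [QKDAux.sum_swap3 (fun q : Key L × Key L × C => (στ q).trace.re)]
                simp only [στ]
                rw [Finset.sum_comm]
                refine Finset.sum_congr rfl fun q _ => ?_
                simp [apply_ite Matrix.trace, apply_ite Complex.re, Finset.sum_ite_eq']
      -- the key identity: the difference is a difference of PSD sums
      have hDx : ∀ x : Key L × Key L × C',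
          N ρ (x.1, x.2.1, (c, x.2.2)) - idealMap (N ρ) (x.1, x.2.1, (c, x.2.2))
          = (∑ ct : Ct, Nc (Pf ct)) x - (∑ ct : Ct, Nc (Qf ct)) x := by
        intro x
        have h1 : N ρ (x.1, x.2.1, (c, x.2.2))
            = Nc (fun q => ρ (q.1, q.2, c)) (x.1, x.2.1, x.2.2) :=
          hNc ρ x.1 x.2.1 x.2.2
        have h2 : idealMap (N ρ) (x.1, x.2.1, (c, x.2.2))
            = Nc (fun q => idealMap ρ (q.1, q.2, c)) (x.1, x.2.1, x.2.2) := by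
          rw [← hcomm ρ]
          exact hNc (idealMap ρ) x.1 x.2.1 x.2.2
        have h3 : (fun q : Key L × Key L => ρ (q.1, q.2, c))
              - (fun q : Key L × Key L => idealMap ρ (q.1, q.2, c))
            = ∑ ct : Ct, (Pf ct - Qf ct) := by
          funext q
          have hm : ∀ kA kB : Key L, ρ (kA, kB, c) = ∑ ct : Ct, η (kA, kB, (c, ct)) :=
            fun kA kB => (hmarg kA kB c hc).symm
          have him := QKDAux.idealMap_marg η ρ c hm q.1 q.2
          simp only [Pi.sub_apply, Finset.sum_apply]
          rw [hm q.1 q.2, him, ← Finset.sum_sub_distrib]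
          refine Finset.sum_congr rfl fun ct _ => ?_
          exact hPQ ct q
        calc N ρ (x.1, x.2.1, (c, x.2.2)) - idealMap (N ρ) (x.1, x.2.1, (c, x.2.2))
            = Nc ((fun q : Key L × Key L => ρ (q.1, q.2, c))
                - (fun q : Key L × Key L => idealMap ρ (q.1, q.2, c))) (x.1, x.2.1, x.2.2) := by
              rw [map_sub]
              simp only [Pi.sub_apply]
              rw [h1, h2]
          _ = Nc (∑ ct : Ct, (Pf ct - Qf ct)) (x.1, x.2.1, x.2.2) := by rw [h3]
          _ = (∑ ct : Ct, Nc (Pf ct)) x - (∑ ct : Ct, Nc (Qf ct)) x := by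
              rw [map_sum]
              simp only [Finset.sum_apply]
              rw [← Finset.sum_sub_distrib]
              refine Finset.sum_congr rfl fun ct _ => ?_
              rw [map_sub]
              rfl
      have hPpsd : ∀ x, ((∑ ct : Ct, Nc (Pf ct)) x).PosSemidef := by
        intro x
        rw [Finset.sum_apply]
        exact QKDAux.psd_sum _ _ fun ct _ => (hext (Pf ct) (hPf ct)).1 x
      have hQpsd : ∀ x, ((∑ ct : Ct, Nc (Qf ct)) x).PosSemidef := by
        intro x
        rw [Finset.sum_apply]
        exact QKDAux.psd_sum _ _ fun ct _ => (hext (Qf ct) (hQf ct)).1 x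
      have hsplit : ∀ F : Ct → (Key L × Key L × C' → Matrix d' d' ℂ),
          ∑ x : Key L × Key L × C', ((∑ ct : Ct, F ct) x).trace.re
            = ∑ ct : Ct, ∑ x : Key L × Key L × C', (F ct x).trace.re := by
        intro F
        calc ∑ x : Key L × Key L × C', ((∑ ct : Ct, F ct) x).trace.re
            = ∑ x : Key L × Key L × C', ∑ ct : Ct, (F ct x).trace.re := by
              refine Finset.sum_congr rfl fun x _ => ?_
              rw [Finset.sum_apply, Matrix.trace_sum, Complex.re_sum]
          _ = ∑ ct : Ct, ∑ x : Key L × Key L × C', (F ct x).trace.re := Finset.sum_comm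
      calc ∑ x : Key L × Key L × C',
            traceNorm (N ρ (x.1, x.2.1, (c, x.2.2)) - idealMap (N ρ) (x.1, x.2.1, (c, x.2.2)))
          ≤ ∑ x : Key L × Key L × C',
              (((∑ ct : Ct, Nc (Pf ct)) x).trace.re
                + ((∑ ct : Ct, Nc (Qf ct)) x).trace.re) := by
            refine Finset.sum_le_sum fun x _ => ?_
            rw [hDx x]
            exact QKDAux.traceNorm_sub_le (hPpsd x) (hQpsd x)
        _ = (∑ ct : Ct, ∑ x : Key L × Key L × C', (Nc (Pf ct) x).trace.re)
            + (∑ ct : Ct, ∑ x : Key L × Key L × C', (Nc (Qf ct) x).trace.re) := by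
            rw [Finset.sum_add_distrib, hsplit, hsplit]
        _ ≤ (∑ ct : Ct, ∑ q : Key L × Key L, (Pf ct q).trace.re)
            + (∑ ct : Ct, ∑ q : Key L × Key L, (Qf ct q).trace.re) :=
            add_le_add (Finset.sum_le_sum fun ct _ => (hext (Pf ct) (hPf ct)).2)
              (Finset.sum_le_sum fun ct _ => (hext (Qf ct) (hQf ct)).2)
        _ = ∑ ct : Ct, ∑ q : Key L × Key L,
              traceNorm (η (q.1, q.2, (c, ct)) - idealMap η (q.1, q.2, (c, ct))) := by
            rw [← Finset.sum_add_distrib]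
            refine Finset.sum_congr rfl fun ct _ => ?_
            rw [← Finset.sum_add_distrib]
            refine Finset.sum_congr rfl fun q _ => ?_
            exact htrPQ ct q
        _ = ∑ y : Key L × Key L × Ct,
              traceNorm (η (y.1, y.2.1, (c, y.2.2)) - idealMap η (y.1, y.2.1, (c, y.2.2))) :=
            (QKDAux.sum_swap3 (fun y : Key L × Key L × Ct =>
              traceNorm (η (y.1, y.2.1, (c, y.2.2))
                - idealMap η (y.1, y.2.1, (c, y.2.2))))).symm
    · -- abort branch: every term is zero
      have hzero : ∀ x : Key L × Key L × C',
          N ρ (x.1, x.2.1, (c, x.2.2)) - idealMap (N ρ) (x.1, x.2.1, (c, x.2.2)) = 0 := by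
        intro x
        have hidm : idealMap (N ρ) (x.1, x.2.1, (c, x.2.2))
            = idealWt x.1 x.2.1 • ∑ q : Key L × Key L,
                (if lenKey q.1 = lenKey x.1 ∧ lenKey q.2 = lenKey x.2.1
                  then N ρ (q.1, q.2, (c, x.2.2)) else 0) := rfl
        by_cases hbot : (x.1, x.2.1) = (botKey L, botKey L)
        · have hxA : x.1 = botKey L := congrArg Prod.fst hbot
          have hxB : x.2.1 = botKey L := congrArg Prod.snd hbot
          have hsum : (∑ q : Key L × Key L,
              (if lenKey q.1 = lenKey x.1 ∧ lenKey q.2 = lenKey x.2.1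
                then N ρ (q.1, q.2, (c, x.2.2)) else 0))
              = N ρ (x.1, x.2.1, (c, x.2.2)) := by
            rw [Finset.sum_eq_single (x.1, x.2.1)]
            · simp
            · intro q _ hq
              split_ifs with hcond
              · exfalso
                apply hq
                obtain ⟨hc1, hc2⟩ := hcond
                rw [hxA] at hc1
                rw [hxB] at hc2
                have hq1 : q.1 = botKey L := QKDAux.key_len_zero_eq_bot hc1
                have hq2 : q.2 = botKey L := QKDAux.key_len_zero_eq_bot hc2
                exact Prod.ext (hq1.trans hxA.symm) (hq2.trans hxB.symm)
              · rfl
            · intro hx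
              exact absurd (Finset.mem_univ _) hx
          have hwt : idealWt x.1 x.2.1 = 1 := by
            rw [hxA, hxB, QKDAux.idealWt_bot]
          rw [hidm, hsum, hwt, one_smul, sub_self]
        · have h0 : N ρ (x.1, x.2.1, (c, x.2.2)) = 0 :=
            habort ρ hρ c hc x.2.2 x.1 x.2.1 hbot
          have hsum : (∑ q : Key L × Key L,
              (if lenKey q.1 = lenKey x.1 ∧ lenKey q.2 = lenKey x.2.1
                then N ρ (q.1, q.2, (c, x.2.2)) else 0)) = 0 := by
            refine Finset.sum_eq_zero fun q _ => ?_
            split_ifs with hcond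
            · refine habort ρ hρ c hc x.2.2 q.1 q.2 ?_
              intro hq
              apply hbot
              obtain ⟨hc1, hc2⟩ := hcond
              have hq1 : q.1 = botKey L := congrArg Prod.fst hq
              have hq2 : q.2 = botKey L := congrArg Prod.snd hq
              rw [hq1] at hc1
              rw [hq2] at hc2
              have h1 : x.1 = botKey L := QKDAux.key_len_zero_eq_bot hc1.symm
              have h2 : x.2.1 = botKey L := QKDAux.key_len_zero_eq_bot hc2.symm
              exact Prod.ext h1 h2
            · rfl
          rw [hidm, hsum, smul_zero, h0, sub_self]
      calc ∑ x : Key L × Key L × C',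
            traceNorm (N ρ (x.1, x.2.1, (c, x.2.2)) - idealMap (N ρ) (x.1, x.2.1, (c, x.2.2)))
          = 0 := by
            refine Finset.sum_eq_zero fun x _ => ?_
            rw [hzero x, QKDAux.traceNorm_zero]
        _ ≤ _ := Finset.sum_nonneg fun y _ => QKDAux.traceNorm_nonneg _
  calc ∑ c : C, ∑ x : Key L × Key L × C',
        traceNorm (N ρ (x.1, x.2.1, (c, x.2.2)) - idealMap (N ρ) (x.1, x.2.1, (c, x.2.2)))
      ≤ ∑ c : C, ∑ y : Key L × Key L × Ct,
        traceNorm (η (y.1, y.2.1, (c, y.2.2)) - idealMap η (y.1, y.2.1, (c, y.2.2))) :=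
        Finset.sum_le_sum fun c _ => key c
    _ ≤ ε := hdist
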